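/- In a free fusion ring ℤM over a nonempty fusion set S, every basis element a_w with w ≠ 1 (the empty word) satisfies a_w · a_{w̄} ≠ 1. In particular, the group of invertible basis elements among the a_w consists only of a_∅ = 1. -/

import Mathlib

/-- Conjugation of a word: reverse the word and conjugate each letter. -/
def wconj {S : Type*} (c : S → S) (w : List S) : List S :=
  (w.map c).reverse

/-- Fusion of two words: fuse last letter of `w` with first letter of `w'`. -/
def wfuse {S : Type*} (f : S → S → Option S) (w w' : List S) : Option (List S) :=
  match w.getLast?, w'.head? with
  | some a, some b => (f a b).map (fun r => w.dropLast ++ r :: w'.tail)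
  | _, _ => none

/-- In a free fusion ring over a nonempty fusion set, no basis element `a_w` with
`w` a nonempty word satisfies `a_w ⬝ a_{w̄} = 1`; in particular among the basis
elements only `a_∅ = 1` is invertible in this way. -/
theorem freeFusionRing_no_nontrivial_units {S : Type*} [DecidableEq S] [Nonempty S]
    (f : S → S → Option S) (c : S → S)
    (hassoc : ∀ s t r : S, (f s t).bind (fun x => f x r) = (f t r).bind (fun x => f s x))
    (hinv : ∀ s : S, c (c s) = s)
    (hcompat : ∀ s₁ s₂ s₃ : S, f s₁ s₂ = some (c s₃) ↔ f s₂ s₃ = some (c s₁))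
    {R : Type*} [Ring R] (b : Module.Basis (List S) ℤ R)
    (hone : (b [] : R) = 1)
    (hmul : ∀ w w' : List S, (b w : R) * b w' =
      ∑ n ∈ Finset.range (min w.length w'.length + 1),
        if w'.take n = wconj c (w.drop (w.length - n)) then
          (b (w.take (w.length - n) ++ w'.drop n) +
            ((wfuse f (w.take (w.length - n)) (w'.drop n)).elim 0 (fun u => (b u : R))))
        else 0) :
    (∀ w : List S, w ≠ [] → (b w : R) * b (wconj c w) ≠ 1) ∧
    (∀ w : List S, (b w : R) * b (wconj c w) = 1 → w = []) := by
  have key : ∀ w : List S, w ≠ [] → (b w : R) * b (wconj c w) ≠ 1 := by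
    intro w hw h1
    set t : List S := w ++ wconj c w with ht
    have htne : t ≠ [] := by simp [ht, hw]
    have hcoord : ∀ u : List S, b.coord t (b u) = if u = t then 1 else 0 := by
      intro u
      rw [Module.Basis.coord_apply, Module.Basis.repr_self_apply]
    have hnn : ∀ u : List S, (0 : ℤ) ≤ b.coord t (b u) := by
      intro u; rw [hcoord]; split <;> norm_num
    rw [hmul] at h1
    have h2 := congrArg (b.coord t) h1
    rw [map_sum] at h2
    have hrhs : b.coord t (1 : R) = 0 := by
      rw [← hone, hcoord]
      simp [Ne.symm htne]
    rw [hrhs] at h2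
    set F : ℕ → ℤ := fun n => b.coord t
      (if (wconj c w).take n = wconj c (w.drop (w.length - n)) then
          (b (w.take (w.length - n) ++ (wconj c w).drop n) +
            ((wfuse f (w.take (w.length - n)) ((wconj c w).drop n)).elim 0 (fun u => (b u : R))))
        else 0) with hF
    have hFnn : ∀ n ∈ Finset.range (min w.length (wconj c w).length + 1), 0 ≤ F n := by
      intro n _
      rw [hF]
      dsimp only
      split
      · rw [map_add]
        refine add_nonneg (hnn _) ?_
        cases h : wfuse f (w.take (w.length - n)) ((wconj c w).drop n) with
        | none => simp
        | some u => simpa using hnn u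
      · simp
    have h0 : (1 : ℤ) ≤ F 0 := by
      rw [hF]
      dsimp only
      rw [if_pos (by simp [wconj])]
      rw [map_add]
      have e1 : b.coord t (b (w.take (w.length - 0) ++ (wconj c w).drop 0)) = 1 := by
        rw [hcoord]
        simp [ht]
      have e2 : (0 : ℤ) ≤ b.coord t
          ((wfuse f (w.take (w.length - 0)) ((wconj c w).drop 0)).elim 0 fun u => (b u : R)) := by
        cases h : wfuse f (w.take (w.length - 0)) ((wconj c w).drop 0) with
        | none => simp
        | some u => simpa using hnn u
      rw [e1]
      linarith
    have hge : (1 : ℤ) ≤ ∑ n ∈ Finset.range (min w.length (wconj c w).length + 1), F n :=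
      le_trans h0 (Finset.single_le_sum hFnn (Finset.mem_range.mpr (Nat.succ_pos _)))
    rw [h2] at hge
    exact absurd hge (by norm_num)
  refine ⟨key, fun w h1 => ?_⟩
  by_contra hw
  exact key w hw h1
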